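/- Let C be an abelian category with enough projectives and enough injectives, such that every projective object of C is injective, C has sequential (ℕ-indexed) colimits, and a sequential colimit of exact sequences in C is exact. Let F, G : ℕ ⥤ C be functors all of whose transition maps F(n) → F(n+1) and G(n) → G(n+1) are monomorphisms, and let φ : F → G be a natural transformation such that φ(n) : F(n) → G(n) is a stable equivalence for every n ∈ ℕ. Then the induced map colim F → colim G is a stable equivalence. -/

import Mathlib

set_option maxHeartbeats 1000000

open CategoryTheory Limits

universe v u

/-- A morphism factors through a projective object. -/
def FactorsThroughProjective {C : Type u} [Category.{v} C]
    {X Y : C} (f : X ⟶ Y) : Prop :=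
  ∃ (P : C) (_ : Projective P) (g : X ⟶ P) (h : P ⟶ Y), g ≫ h = f

/-- A morphism `f : X ⟶ Y` is a stable equivalence if there is `h : Y ⟶ X`
such that `h ∘ f` is stably equivalent to `id_X` and `f ∘ h` is stably
equivalent to `id_Y`. -/
def IsStableEquiv {C : Type u} [Category.{v} C] [Preadditive C]
    {X Y : C} (f : X ⟶ Y) : Prop :=
  ∃ h : Y ⟶ X, FactorsThroughProjective (f ≫ h - 𝟙 X) ∧
    FactorsThroughProjective (h ≫ f - 𝟙 Y)

section Aux

variable {C : Type u} [Category.{v} C]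

theorem aux_projective_of_retract {K P : C} (hP : Projective P) (s : K ⟶ P) (r : P ⟶ K)
    (hsr : s ≫ r = 𝟙 K) : Projective K := by
  constructor
  intro E X f e he
  obtain ⟨f', hf'⟩ := hP.factors (r ≫ f) e
  exact ⟨s ≫ f', by rw [Category.assoc, hf', ← Category.assoc, hsr, Category.id_comp]⟩

theorem aux_projective_biprod [Preadditive C] [HasBinaryBiproducts C] {P Q : C}
    (hP : Projective P) (hQ : Projective Q) : Projective (P ⊞ Q) := by
  constructor
  intro E X f e he
  obtain ⟨p, hp⟩ := hP.factors (biprod.inl ≫ f) e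
  obtain ⟨q, hq⟩ := hQ.factors (biprod.inr ≫ f) e
  refine ⟨biprod.desc p q, ?_⟩
  apply biprod.hom_ext' <;> simp [hp, hq]

theorem aux_projective_biproduct {J : Type} [HasZeroMorphisms C] (f : J → C) [HasBiproduct f]
    (h : ∀ j, Projective (f j)) : Projective (⨁ f) := by
  constructor
  intro E X g e he
  have hj : ∀ j, ∃ g', g' ≫ e = biproduct.ι f j ≫ g := fun j => (h j).factors _ e
  choose l hl using hj
  refine ⟨biproduct.desc l, ?_⟩
  apply biproduct.hom_ext'
  intro j
  rw [← Category.assoc, biproduct.ι_desc, hl]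

theorem aux_ftp_precomp {X Y Z : C} (f : X ⟶ Y) {g : Y ⟶ Z}
    (hg : FactorsThroughProjective g) : FactorsThroughProjective (f ≫ g) := by
  obtain ⟨P, hP, a, b, hab⟩ := hg
  exact ⟨P, hP, f ≫ a, b, by rw [Category.assoc, hab]⟩

theorem aux_ftp_postcomp {X Y Z : C} {f : X ⟶ Y}
    (hf : FactorsThroughProjective f) (g : Y ⟶ Z) : FactorsThroughProjective (f ≫ g) := by
  obtain ⟨P, hP, a, b, hab⟩ := hf
  exact ⟨P, hP, a, b ≫ g, by rw [← Category.assoc, hab]⟩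

theorem aux_ftp_add [Preadditive C] [HasBinaryBiproducts C] {X Y : C} {f g : X ⟶ Y}
    (hf : FactorsThroughProjective f) (hg : FactorsThroughProjective g) :
    FactorsThroughProjective (f + g) := by
  obtain ⟨P, hP, a, b, hab⟩ := hf
  obtain ⟨Q, hQ, u, v, huv⟩ := hg
  exact ⟨P ⊞ Q, aux_projective_biprod hP hQ, biprod.lift a u, biprod.desc b v,
    by rw [biprod.lift_desc, hab, huv]⟩

theorem aux_ftp_zero [Preadditive C] [EnoughProjectives C] (X Y : C) :
    FactorsThroughProjective (0 : X ⟶ Y) :=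
  ⟨Projective.over X, inferInstance, 0, 0, by simp⟩

theorem aux_isStableEquiv_comp [Preadditive C] [HasBinaryBiproducts C] {X Y Z : C}
    {f : X ⟶ Y} {g : Y ⟶ Z} (hf : IsStableEquiv f) (hg : IsStableEquiv g) :
    IsStableEquiv (f ≫ g) := by
  obtain ⟨f', hf1, hf2⟩ := hf
  obtain ⟨g', hg1, hg2⟩ := hg
  refine ⟨g' ≫ f', ?_, ?_⟩
  · have : (f ≫ g) ≫ g' ≫ f' - 𝟙 X = f ≫ ((g ≫ g' - 𝟙 Y) ≫ f') + (f ≫ f' - 𝟙 X) := by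
      simp only [Preadditive.sub_comp, Preadditive.comp_sub, Preadditive.comp_add,
        Category.id_comp, Category.comp_id, Category.assoc]
      abel
    rw [this]
    exact aux_ftp_add (aux_ftp_precomp f (aux_ftp_postcomp hg1 f')) hf1
  · have : (g' ≫ f') ≫ f ≫ g - 𝟙 Z = g' ≫ ((f' ≫ f - 𝟙 Y) ≫ g) + (g' ≫ g - 𝟙 Z) := by
      simp only [Preadditive.sub_comp, Preadditive.comp_sub, Preadditive.comp_add,
        Category.id_comp, Category.comp_id, Category.assoc]
      abel
    rw [this]
    exact aux_ftp_add (aux_ftp_precomp g' (aux_ftp_postcomp hf2 g)) hg2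

theorem aux_mono_biprod_map [HasZeroMorphisms C] [HasBinaryBiproducts C]
    {W X Y Z : C} (f : W ⟶ Y) (g : X ⟶ Z) [Mono f] [Mono g] : Mono (biprod.map f g) := by
  constructor
  intro T u v h
  apply biprod.hom_ext
  · have h1 := congrArg (fun t => t ≫ biprod.fst) h
    simp only [Category.assoc, biprod.map_fst] at h1
    rw [← Category.assoc, ← Category.assoc] at h1
    exact (cancel_mono f).1 h1
  · have h1 := congrArg (fun t => t ≫ biprod.snd) h
    simp only [Category.assoc, biprod.map_snd] at h1
    rw [← Category.assoc, ← Category.assoc] at h1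
    exact (cancel_mono g).1 h1

/-- An epimorphism which is a stable equivalence has projective kernel. -/
theorem aux_projective_kernel [Abelian C] {X Y : C} (ψ : X ⟶ Y) [Epi ψ]
    (hψ : IsStableEquiv ψ) : Projective (kernel ψ) := by
  obtain ⟨h, ⟨Pm, hPm, a, b, hab⟩, ⟨Qm, hQm, u, v, huv⟩⟩ := hψ
  haveI := hPm; haveI := hQm
  set v' : Qm ⟶ X := Projective.factorThru v ψ with hv'def
  have hv' : v' ≫ ψ = v := Projective.factorThru_comp v ψ
  set h' : Y ⟶ X := h - u ≫ v' with hh'def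
  have hh'ψ : h' ≫ ψ = 𝟙 Y := by
    rw [hh'def, Preadditive.sub_comp, Category.assoc, hv']
    rw [huv]
    abel
  set w : X ⟶ X := 𝟙 X - ψ ≫ h' with hwdef
  have hwψ : w ≫ ψ = 0 := by
    rw [hwdef, Preadditive.sub_comp, Category.id_comp, Category.assoc, hh'ψ,
      Category.comp_id, sub_self]
  have hwfac : w = biprod.lift a (ψ ≫ u) ≫ biprod.desc (-b) v' := by
    rw [biprod.lift_desc, hwdef, hh'def]
    rw [Preadditive.comp_sub]
    have : a ≫ (-b) = -(ψ ≫ h - 𝟙 X) := by rw [Preadditive.comp_neg, hab]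
    rw [this]
    simp only [Category.assoc]
    abel
  set t : X ⟶ kernel ψ := kernel.lift ψ w hwψ with htdef
  have htι : t ≫ kernel.ι ψ = w := kernel.lift_ι ψ w hwψ
  have hk : kernel.ι ψ ≫ t = 𝟙 (kernel ψ) := by
    rw [← cancel_mono (kernel.ι ψ), Category.assoc, htι, Category.id_comp, hwdef,
      Preadditive.comp_sub, Category.comp_id, ← Category.assoc, kernel.condition,
      zero_comp, sub_zero]
  refine aux_projective_of_retract (aux_projective_biprod hPm hQm)
    (kernel.ι ψ ≫ biprod.lift a (ψ ≫ u)) (biprod.desc (-b) v' ≫ t) ?_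
  have hιw : kernel.ι ψ ≫ w = kernel.ι ψ := by
    rw [hwdef, Preadditive.comp_sub, Category.comp_id, ← Category.assoc, kernel.condition,
      zero_comp, sub_zero]
  rw [Category.assoc, ← Category.assoc (biprod.lift a (ψ ≫ u)), ← hwfac, ← Category.assoc,
    hιw, hk]

/-- An epimorphism with projective and injective kernel is a stable equivalence. -/
theorem aux_stableEquiv_of_epi [Abelian C] [EnoughProjectives C] {X Y : C}
    (ψ : X ⟶ Y) [Epi ψ] (hp : Projective (kernel ψ)) (hi : Injective (kernel ψ)) :
    IsStableEquiv ψ := by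
  haveI := hi
  set ρ : X ⟶ kernel ψ := Injective.factorThru (𝟙 (kernel ψ)) (kernel.ι ψ) with hρdef
  have hρ : kernel.ι ψ ≫ ρ = 𝟙 (kernel ψ) := Injective.comp_factorThru _ _
  have hcond : kernel.ι ψ ≫ (𝟙 X - ρ ≫ kernel.ι ψ) = 0 := by
    rw [Preadditive.comp_sub, Category.comp_id, ← Category.assoc, hρ, Category.id_comp,
      sub_self]
  set h : Y ⟶ X := Abelian.epiDesc ψ (𝟙 X - ρ ≫ kernel.ι ψ) hcond with hhdef
  have hψh : ψ ≫ h = 𝟙 X - ρ ≫ kernel.ι ψ := Abelian.comp_epiDesc ψ _ hcond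
  have hhψ : h ≫ ψ = 𝟙 Y := by
    rw [← cancel_epi ψ, ← Category.assoc, hψh, Preadditive.sub_comp, Category.id_comp,
      Category.assoc, kernel.condition, comp_zero, sub_zero, Category.comp_id]
  refine ⟨h, ⟨kernel ψ, hp, -ρ, kernel.ι ψ, ?_⟩, ?_⟩
  · rw [hψh]; simp
  · rw [hhψ, sub_self]; exact aux_ftp_zero Y Y

end Aux
section ColimAux

variable {C : Type u} [Category.{v} C]

/-- The colimit of a sequence of projective-injective objects with monic
transition maps is projective. -/
theorem aux_projective_colimit [Abelian C] [HasColimitsOfShape ℕ C] (H : ℕ ⥤ C)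
    (hp : ∀ n, Projective (H.obj n)) (hi : ∀ n, Injective (H.obj n))
    (hm : ∀ n, Mono (H.map (homOfLE (Nat.le_succ n)))) : Projective (colimit H) := by
  constructor
  intro E X f e he
  -- retractions of the transition maps
  have ret : ∀ n, ∃ r : H.obj (n + 1) ⟶ H.obj n,
      H.map (homOfLE (Nat.le_succ n)) ≫ r = 𝟙 (H.obj n) := by
    intro n
    haveI := hi n; haveI := hm n
    exact ⟨Injective.factorThru (𝟙 (H.obj n)) (H.map (homOfLE (Nat.le_succ n))),
      Injective.comp_factorThru _ _⟩
  choose r hr using ret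
  -- initial lifts
  have lifts : ∀ n, ∃ g : H.obj n ⟶ E, g ≫ e = colimit.ι H n ≫ f := fun n =>
    (hp n).factors (colimit.ι H n ≫ f) e
  choose l0 hl0 using lifts
  -- corrected lifts
  let ℓ : ∀ n : ℕ, H.obj n ⟶ E := fun n => Nat.rec (l0 0)
    (fun n ℓn => l0 (n + 1) + r n ≫ (ℓn - H.map (homOfLE (Nat.le_succ n)) ≫ l0 (n + 1))) n
  have hℓsucc : ∀ n, ℓ (n + 1) =
      l0 (n + 1) + r n ≫ (ℓ n - H.map (homOfLE (Nat.le_succ n)) ≫ l0 (n + 1)) := fun n => rfl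
  have hℓe : ∀ n, ℓ n ≫ e = colimit.ι H n ≫ f := by
    intro n
    induction n with
    | zero => exact hl0 0
    | succ n ih =>
      rw [hℓsucc n, Preadditive.add_comp, hl0 (n + 1), Category.assoc,
        Preadditive.sub_comp, ih, Category.assoc, hl0 (n + 1), ← Category.assoc,
        colimit.w H (homOfLE (Nat.le_succ n)), sub_self, comp_zero, add_zero]
  have hcomp : ∀ n, H.map (homOfLE (Nat.le_succ n)) ≫ ℓ (n + 1) = ℓ n := by
    intro n
    rw [hℓsucc n, Preadditive.comp_add, ← Category.assoc, hr n, Category.id_comp]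
    abel
  have hcompat : ∀ m n (h : m ≤ n), H.map (homOfLE h) ≫ ℓ n = ℓ m := by
    intro m n h
    induction n, h using Nat.le_induction with
    | base =>
      have : (homOfLE (le_refl m) : m ⟶ m) = 𝟙 m := Subsingleton.elim _ _
      rw [this, H.map_id, Category.id_comp]
    | succ n hn ih =>
      have : (homOfLE (Nat.le_succ_of_le hn) : m ⟶ n + 1) =
          homOfLE hn ≫ homOfLE (Nat.le_succ n) := Subsingleton.elim _ _
      rw [this, H.map_comp, Category.assoc, hcomp n, ih]
  refine ⟨colimit.desc H ⟨E, { app := ℓ, naturality := ?_ }⟩, ?_⟩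
  · intro m n g
    have hg : g = homOfLE (leOfHom g) := Subsingleton.elim _ _
    rw [hg]
    simpa using hcompat m n (leOfHom g)
  · apply colimit.hom_ext
    intro n
    rw [← Category.assoc, colimit.ι_desc]
    exact hℓe n

theorem aux_epi_colimMap [Abelian C] [HasColimitsOfShape ℕ C] {A B : ℕ ⥤ C} (α : A ⟶ B)
    (h : ∀ n, Epi (α.app n)) : Epi (colimMap α) := by
  constructor
  intro Z p q hpq
  apply colimit.hom_ext
  intro n
  haveI := h n
  rw [← cancel_epi (α.app n)]
  simp only [← Category.assoc, ← ι_colimMap]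
  simp only [Category.assoc, hpq]

theorem aux_colimMap_comp [Abelian C] [HasColimitsOfShape ℕ C] {A B D : ℕ ⥤ C}
    (α : A ⟶ B) (β : B ⟶ D) : colimMap (α ≫ β) = colimMap α ≫ colimMap β := by
  apply colimit.hom_ext; intro n; simp

end ColimAux

/-- sequential homotopy colimits are well-defined.  Let `C`
be an abelian category with enough projectives, enough injectives, in which
every projective object is injective, with sequential (ℕ-indexed) colimits,
and in which sequential colimits of exact sequences are exact (i.e. the
sequential colimit functor is exact; since it is automatically right exact,
we require that it preserves finite limits).  If `F, G : ℕ ⥤ C` have all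
transition maps monomorphisms, and `φ : F ⟶ G` is a natural transformation
whose components are stable equivalences, then the induced map
`colim F ⟶ colim G` is a stable equivalence. -/
theorem sequential_homotopy_colimits_well_defined
    {C : Type u} [Category.{v} C] [Abelian C] [EnoughProjectives C]
    [EnoughInjectives C] [HasColimitsOfShape ℕ C]
    (hPI : ∀ P : C, Projective P → Injective P)
    (hAB5 : PreservesFiniteLimits (colim : (ℕ ⥤ C) ⥤ C))
    (F G : ℕ ⥤ C)
    (hF : ∀ n : ℕ, Mono (F.map (homOfLE (Nat.le_succ n))))
    (hG : ∀ n : ℕ, Mono (G.map (homOfLE (Nat.le_succ n))))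
    (φ : F ⟶ G) (hφ : ∀ n : ℕ, IsStableEquiv (φ.app n)) :
    IsStableEquiv (colimMap φ) := by
  haveI := hAB5
  haveI : HasFiniteBiproducts C := Abelian.hasFiniteBiproducts
  -- the auxiliary projective sequence
  let Q : ℕ → C := fun k => Projective.over (G.obj k)
  let PP : ℕ → C := fun n => ⨁ (fun k : Fin (n + 1) => Q (k : ℕ))
  let d : ∀ n, PP n ⟶ PP (n + 1) := fun n =>
    biproduct.desc (fun k => biproduct.ι (fun j : Fin (n + 2) => Q (j : ℕ)) k.castSucc)
  let P : ℕ ⥤ C := Functor.ofSequence d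
  have hPPproj : ∀ n, Projective (PP n) := fun n =>
    aux_projective_biproduct _ (fun k => inferInstance)
  have hd : ∀ n, ∃ rr : PP (n + 1) ⟶ PP n, d n ≫ rr = 𝟙 (PP n) := by
    intro n
    refine ⟨biproduct.desc (fun k : Fin (n + 2) =>
      Fin.lastCases (motive := fun k => Q ((k : Fin (n+2)) : ℕ) ⟶ PP n) 0
        (fun j => biproduct.ι (fun j : Fin (n + 1) => Q (j : ℕ)) j) k), ?_⟩
    apply biproduct.hom_ext'
    intro k
    rw [biproduct.ι_desc_assoc, biproduct.ι_desc, Fin.lastCases_castSucc, Category.comp_id]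
  choose rd hrd using hd
  have hdmono : ∀ n, Mono (d n) := by
    intro n
    haveI : Mono (d n ≫ rd n) := by rw [hrd n]; infer_instance
    exact mono_of_mono (d n) (rd n)
  have hPmono : ∀ n, Mono (P.map (homOfLE (Nat.le_succ n))) := by
    intro n
    have hmap : P.map (homOfLE (Nat.le_succ n)) = d n := Functor.ofSequence_map_homOfLE_succ d n
    rw [hmap]; exact hdmono n
  -- the map from the projective sequence to G
  let ρ : ∀ n, PP n ⟶ G.obj n := fun n =>
    biproduct.desc (fun k => Projective.π (G.obj (k : ℕ)) ≫ G.map (homOfLE k.is_le))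
  have hρnat : ∀ n, d n ≫ ρ (n + 1) = ρ n ≫ G.map (homOfLE (Nat.le_succ n)) := by
    intro n
    apply biproduct.hom_ext'
    intro k
    simp only [d, ρ, biproduct.ι_desc_assoc, biproduct.ι_desc, Category.assoc, ← G.map_comp]
    rfl
  have hρepi : ∀ n, Epi (ρ n) := by
    intro n
    have h1 : biproduct.ι (fun k : Fin (n + 1) => Q (k : ℕ)) (Fin.last n) ≫ ρ n
        = Projective.π (G.obj ((Fin.last n : Fin (n+1)) : ℕ)) ≫
          G.map (homOfLE (Fin.last n).is_le) := biproduct.ι_desc _ _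
    have h2 : G.map (homOfLE (Fin.last n).is_le) = 𝟙 (G.obj n) := by
      have h3 : (homOfLE (Fin.last n).is_le : ((Fin.last n : Fin (n+1)) : ℕ) ⟶ n) = 𝟙 n :=
        Subsingleton.elim _ _
      rw [h3]
      exact G.map_id n
    haveI : Epi (biproduct.ι (fun k : Fin (n + 1) => Q (k : ℕ)) (Fin.last n) ≫ ρ n) := by
      rw [h1, h2]
      haveI : Epi (𝟙 (G.obj n)) := ⟨fun g h e => by simpa using e⟩
      exact epi_comp _ _
    exact epi_of_epi (biproduct.ι (fun k : Fin (n + 1) => Q (k : ℕ)) (Fin.last n)) (ρ n)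
  -- the fattened functor F'
  let F' : ℕ ⥤ C :=
    { obj := fun n => F.obj n ⊞ PP n
      map := fun {m n} g => biprod.map (F.map g) (P.map g)
      map_id := fun n => by
        apply biprod.hom_ext
        · erw [biprod.map_fst]; simp
        · erw [biprod.map_snd, Category.id_comp, P.map_id]
          exact Category.comp_id _
      map_comp := fun {a b c} g h => by
        apply biprod.hom_ext
        · simp only [Category.assoc]
          erw [biprod.map_fst, biprod.map_fst, biprod.map_fst_assoc, Functor.map_comp]
        · simp only [Category.assoc]
          erw [biprod.map_snd, biprod.map_snd, biprod.map_snd_assoc, Functor.map_comp]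
          rfl }
  have hF'mono : ∀ n, Mono (F'.map (homOfLE (Nat.le_succ n))) := by
    intro n
    haveI := hF n
    haveI := hPmono n
    exact aux_mono_biprod_map (F.map (homOfLE (Nat.le_succ n))) (P.map (homOfLE (Nat.le_succ n)))
  -- the natural epimorphism ψ : F' ⟶ G
  let ψ : F' ⟶ G := NatTrans.ofSequence (F := F') (G := G)
    (fun n => biprod.desc (φ.app n) (ρ n))
    (by
      intro n
      apply biprod.hom_ext'
      · show biprod.inl ≫ F'.map _ ≫ _ = biprod.inl ≫ _ ≫ _
        show biprod.inl ≫ biprod.map (F.map _) (P.map _) ≫ biprod.desc (φ.app (n+1)) (ρ (n+1))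
            = biprod.inl ≫ biprod.desc (φ.app n) (ρ n) ≫ G.map _
        erw [biprod.inl_map_assoc, biprod.inl_desc, biprod.inl_desc_assoc]
        exact φ.naturality _
      · show biprod.inr ≫ biprod.map (F.map _) (P.map _) ≫ biprod.desc (φ.app (n+1)) (ρ (n+1))
            = biprod.inr ≫ biprod.desc (φ.app n) (ρ n) ≫ G.map _
        erw [biprod.inr_map_assoc, biprod.inr_desc, biprod.inr_desc_assoc]
        have hmap : P.map (homOfLE (Nat.le_add_right n 1)) = d n :=
          Functor.ofSequence_map_homOfLE_succ d n
        rw [hmap]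
        exact hρnat n)
  have hψapp : ∀ n, ψ.app n = biprod.desc (φ.app n) (ρ n) := fun n => rfl
  -- ψ is a levelwise epimorphism
  have hψepi : ∀ n, Epi (ψ.app n) := by
    intro n
    have h1 : biprod.inr ≫ ψ.app n = ρ n := by rw [hψapp n]; exact biprod.inr_desc _ _
    haveI := hρepi n
    haveI : Epi (biprod.inr ≫ ψ.app n) := by rw [h1]; infer_instance
    exact epi_of_epi biprod.inr (ψ.app n)
  -- ψ is a levelwise stable equivalence
  have hψse : ∀ n, IsStableEquiv (ψ.app n) := by
    intro n
    obtain ⟨h, ⟨Pm, hPm, a, b, hab⟩, hright⟩ := hφ n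
    refine ⟨h ≫ biprod.inl, ?_, ?_⟩
    · have key : ψ.app n ≫ (h ≫ biprod.inl) - 𝟙 (F'.obj n) =
          biprod.lift (biprod.fst ≫ a) biprod.snd ≫
          biprod.desc (b ≫ biprod.inl) (ρ n ≫ h ≫ biprod.inl - biprod.inr) := by
        rw [biprod.lift_desc, hψapp n]
        have hab' : ∀ x : F.obj n ⟶ F.obj n ⊞ PP n,
            a ≫ b ≫ x = φ.app n ≫ h ≫ x - x := fun x => by
          rw [← Category.assoc, hab, Preadditive.sub_comp, Category.id_comp, Category.assoc]
        apply biprod.hom_ext'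
        · simp only [Preadditive.comp_sub, Preadditive.comp_add, Category.comp_id,
            biprod.inl_desc_assoc, Category.assoc, biprod.inl_fst_assoc, biprod.inl_snd_assoc,
            zero_comp, comp_zero, add_zero, sub_zero, hab']
          erw [Category.comp_id]
        · simp only [Preadditive.comp_sub, Preadditive.comp_add, Category.comp_id,
            biprod.inr_desc_assoc, Category.assoc, biprod.inr_fst_assoc, biprod.inr_snd_assoc,
            zero_comp, comp_zero, zero_add, Category.id_comp]
          erw [Category.comp_id]
      rw [key]
      exact ⟨Pm ⊞ PP n, aux_projective_biprod hPm (hPPproj n), _, _, rfl⟩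
    · have h1 : (h ≫ biprod.inl) ≫ ψ.app n = h ≫ φ.app n := by
        rw [Category.assoc, hψapp n, biprod.inl_desc]
      rw [h1]
      exact hright
  -- levelwise facts about the kernel of ψ
  have hcmp : ∀ n : ℕ, IsIso (kernelComparison ψ ((evaluation ℕ C).obj n)) := by
    intro n
    rw [← PreservesKernel.iso_hom]
    infer_instance
  have hKproj : ∀ n, Projective ((kernel ψ).obj n) := by
    intro n
    haveI := hψepi n
    have h1 : Projective (kernel (ψ.app n)) := aux_projective_kernel (ψ.app n) (hψse n)
    haveI := hcmp n
    exact aux_projective_of_retract h1 (kernelComparison ψ ((evaluation ℕ C).obj n))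
      (inv (kernelComparison ψ ((evaluation ℕ C).obj n))) (IsIso.hom_inv_id _)
  have hιmono : ∀ n, Mono ((kernel.ι ψ).app n) := by
    intro n
    haveI := hcmp n
    have h3 : (kernel.ι ψ).app n = kernelComparison ψ ((evaluation ℕ C).obj n) ≫
        kernel.ι (((evaluation ℕ C).obj n).map ψ) :=
      (kernelComparison_comp_ι ψ ((evaluation ℕ C).obj n)).symm
    rw [h3]
    exact mono_comp _ _
  have hKmono : ∀ n, Mono ((kernel ψ).map (homOfLE (Nat.le_succ n))) := by
    intro n
    have hnat := (kernel.ι ψ).naturality (homOfLE (Nat.le_succ n) : n ⟶ n + 1)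
    haveI := hιmono n
    haveI := hιmono (n + 1)
    haveI := hF'mono n
    haveI : Mono ((kernel ψ).map (homOfLE (Nat.le_succ n)) ≫ (kernel.ι ψ).app (n + 1)) := by
      rw [hnat]; exact mono_comp _ _
    exact mono_of_mono ((kernel ψ).map (homOfLE (Nat.le_succ n))) ((kernel.ι ψ).app (n + 1))
  -- the colimit of the kernel is projective
  have hcolimK : Projective (colimit (kernel ψ)) :=
    aux_projective_colimit (kernel ψ) hKproj (fun n => hPI _ (hKproj n)) hKmono
  -- colimMap ψ is an epimorphism with projective kernel, hence a stable equivalence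
  haveI hcolimepi : Epi (colimMap ψ) := aux_epi_colimMap ψ hψepi
  have hkerproj : Projective (kernel (colimMap ψ)) := by
    haveI : IsIso (kernelComparison ψ (colim (J := ℕ) (C := C))) := by
      rw [← PreservesKernel.iso_hom]
      infer_instance
    exact aux_projective_of_retract hcolimK
      (inv (kernelComparison ψ (colim (J := ℕ) (C := C))))
      (kernelComparison ψ (colim (J := ℕ) (C := C))) (IsIso.inv_hom_id _)
  have sEq2 : IsStableEquiv (colimMap ψ) :=
    aux_stableEquiv_of_epi (colimMap ψ) hkerproj (hPI _ hkerproj)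
  -- the inclusion F ⟶ F' and related natural transformations
  let inlN : F ⟶ F' :=
    { app := fun n => biprod.inl
      naturality := fun m n g => by
        show F.map g ≫ biprod.inl = biprod.inl ≫ biprod.map (F.map g) (P.map g)
        rw [biprod.inl_map] }
  let fstN : F' ⟶ F :=
    { app := fun n => biprod.fst
      naturality := fun m n g => by
        show biprod.map (F.map g) (P.map g) ≫ biprod.fst = biprod.fst ≫ F.map g
        rw [biprod.map_fst] }
  let sndN : F' ⟶ P :=
    { app := fun n => biprod.snd
      naturality := fun m n g => by
        show biprod.map (F.map g) (P.map g) ≫ biprod.snd = biprod.snd ≫ P.map g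
        rw [biprod.map_snd] }
  let inrN : P ⟶ F' :=
    { app := fun n => biprod.inr
      naturality := fun m n g => by
        show P.map g ≫ biprod.inr = biprod.inr ≫ biprod.map (F.map g) (P.map g)
        rw [biprod.inr_map] }
  have projColimP : Projective (colimit P) :=
    aux_projective_colimit P hPPproj (fun n => hPI _ (hPPproj n)) hPmono
  -- colimMap inlN is a stable equivalence
  have sEq1 : IsStableEquiv (colimMap inlN) := by
    refine ⟨colimMap fstN, ?_, ?_⟩
    · have h1 : inlN ≫ fstN = 𝟙 F := by
        ext n
        show biprod.inl ≫ biprod.fst = 𝟙 (F.obj n)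
        simp
      have h2 : colimMap (𝟙 F) = 𝟙 (colimit F) := by
        apply colimit.hom_ext; intro n; simp
      rw [← aux_colimMap_comp, h1, h2, sub_self]
      exact aux_ftp_zero _ _
    · have key : colimMap fstN ≫ colimMap inlN - 𝟙 (colimit F') =
          (-(colimMap sndN)) ≫ colimMap inrN := by
        rw [Preadditive.neg_comp, ← aux_colimMap_comp, ← aux_colimMap_comp]
        apply colimit.hom_ext
        intro n
        rw [Preadditive.comp_sub, Preadditive.comp_neg, ι_colimMap, ι_colimMap,
          Category.comp_id]
        show (biprod.fst ≫ biprod.inl) ≫ colimit.ι F' n - colimit.ι F' n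
            = -((biprod.snd ≫ biprod.inr) ≫ colimit.ι F' n)
        have htot : (biprod.fst ≫ biprod.inl) ≫ colimit.ι F' n
            + (biprod.snd ≫ biprod.inr) ≫ colimit.ι F' n = colimit.ι F' n := by
          rw [← Preadditive.add_comp, biprod.total, Category.id_comp]
        set A : F'.obj n ⟶ colimit F' :=
          ((biprod.fst : F'.obj n ⟶ F.obj n) ≫ biprod.inl) ≫ colimit.ι F' n with hA
        set B : F'.obj n ⟶ colimit F' :=
          ((biprod.snd : F'.obj n ⟶ PP n) ≫ biprod.inr) ≫ colimit.ι F' n with hB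
        rw [← htot]
        abel
      rw [key]
      exact ⟨colimit P, projColimP, -(colimMap sndN), colimMap inrN, rfl⟩
  -- conclusion
  have hinlψ : inlN ≫ ψ = φ := by
    ext n
    show biprod.inl ≫ biprod.desc (φ.app n) (ρ n) = φ.app n
    exact biprod.inl_desc _ _
  have hfinal : colimMap φ = colimMap inlN ≫ colimMap ψ := by
    rw [← aux_colimMap_comp, hinlψ]
  rw [hfinal]
  exact aux_isStableEquiv_comp sEq1 sEq2
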